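/- Let X, Y be real symmetric n×n matrices and ζ, η ∈ ℝⁿ with det(λI − X − tζζᵀ) = det(λI − Y − tηηᵀ) for all λ, t ∈ ℝ. Then for every real number μ, the norm of the orthogonal projection of ζ onto the eigenspace ker(X − μI) equals the norm of the orthogonal projection of η onto the eigenspace ker(Y − μI). -/

import Mathlib

open Matrix

open Finset

variable {m : Type*} [Fintype m] [DecidableEq m] {R : Type*} [CommRing R]

lemma det_updateRow_finset_sum {ι : Type*} (M : Matrix m m R) (j : m) (s : Finset ι)
    (f : ι → m → R) :
    (M.updateRow j (∑ k ∈ s, f k)).det = ∑ k ∈ s, (M.updateRow j (f k)).det := by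
  classical
  induction s using Finset.induction with
  | empty =>
    simp only [Finset.sum_empty]
    exact det_eq_zero_of_row_eq_zero j (fun _ => by simp)
  | insert _ _ hk ih =>
    rw [Finset.sum_insert hk, Matrix.det_updateRow_add, ih, Finset.sum_insert hk]

lemma det_updateRow_diagonal (d : m → R) (i : m) (w : m → R) :
    ((Matrix.diagonal d).updateRow i w).det = w i * ∏ j ∈ univ.erase i, d j := by
  have hw : w = ∑ k, w k • (Pi.single k 1 : m → R) := by
    funext j; simp [Pi.single_apply]
  conv_lhs => rw [hw]
  rw [det_updateRow_finset_sum]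
  rw [Finset.sum_eq_single i]
  · have : (Matrix.diagonal d).updateRow i (w i • (Pi.single i 1 : m → R))
        = Matrix.diagonal (Function.update d i (w i)) := by
      ext a b
      by_cases ha : a = i
      · subst ha
        simp [Matrix.updateRow_self, Matrix.diagonal, Pi.single_apply, Function.update,
          eq_comm]
      · simp [Matrix.updateRow_ne ha, Matrix.diagonal_apply, Function.update, ha]
    rw [this, Matrix.det_diagonal, Finset.prod_update_of_mem (Finset.mem_univ i),
      Finset.sdiff_singleton_eq_erase]
  · intro k _ hk
    rw [Matrix.det_updateRow_smul]
    have h0 : ((Matrix.diagonal d).updateRow i (Pi.single k 1 : m → R)).det = 0 := by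
      set M := (Matrix.diagonal d).updateRow i (Pi.single k 1 : m → R) with hM
      have hMk : M k = d k • M i := by
        funext b
        simp [hM, Matrix.updateRow_ne (Ne.symm hk), Matrix.updateRow_self,
          Matrix.diagonal_apply, Pi.single_apply, eq_comm]
        aesop
      have : M = M.updateRow k (d k • M i) := by
        rw [← hMk, Matrix.updateRow_eq_self]
      rw [this, Matrix.det_updateRow_smul]
      have : (M.updateRow k (M i)).det = 0 := by
        apply Matrix.det_zero_of_row_eq (Ne.symm hk)
        rw [Matrix.updateRow_self, Matrix.updateRow_ne (Ne.symm hk)]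
      rw [this, mul_zero]
    rw [h0, mul_zero]
  · intro h; exact absurd (Finset.mem_univ i) h

lemma det_diagonal_add_smul_vecMulVec (d w : m → R) (c : R) :
    (Matrix.diagonal d + c • vecMulVec w w).det
      = ∏ i, d i + c * ∑ i, (w i * w i) * ∏ j ∈ univ.erase i, d j := by
  classical
  set g : m → m → R := fun i => d i • (Pi.single i 1 : m → R) with hg
  set h : m → m → R := fun i => (c * w i) • w with hh
  have hdet : (Matrix.diagonal d + c • vecMulVec w w).det
      = Matrix.detRowAlternating (g + h) := by
    show Matrix.detRowAlternating _ = _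
    congr 1
    funext i j
    show (Matrix.diagonal d + c • vecMulVec w w) i j = _
    simp [hg, hh, Matrix.diagonal_apply, Pi.single_apply, vecMulVec_apply, mul_comm,
      mul_assoc, mul_left_comm]
    simp [eq_comm]
  rw [hdet, show g + h = h + g from add_comm g h]
  have expand := ((Matrix.detRowAlternating :
      (m → R) [⋀^m]→ₗ[R] R).toMultilinearMap).map_add_univ h g
  simp only [AlternatingMap.coe_multilinearMap] at expand
  rw [expand]
  -- terms with |s| ≥ 2 vanish
  have hzero : ∀ s : Finset m, 1 < s.card →
      Matrix.detRowAlternating (s.piecewise h g) = 0 := by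
    intro s hs
    obtain ⟨i, hi, j, hj, hij⟩ := Finset.one_lt_card.mp hs
    set v := s.piecewise h g with hv
    have hvi : v = Function.update v i ((c * w i) • w) := by
      rw [show ((c * w i) • w) = v i by simp [hv, Finset.piecewise_eq_of_mem _ _ _ hi, hh],
        Function.update_eq_self]
    rw [hvi, AlternatingMap.map_update_smul]
    have hvj : Function.update v i w
        = Function.update (Function.update v i w) j ((c * w j) • w) := by
      rw [show ((c * w j) • w) = Function.update v i w j by
          simp [Function.update_of_ne (Ne.symm hij), hv,
            Finset.piecewise_eq_of_mem _ _ _ hj, hh],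
        Function.update_eq_self]
    rw [hvj, AlternatingMap.map_update_smul]
    have : Matrix.detRowAlternating
        (Function.update (Function.update v i w) j w) = 0 := by
      apply AlternatingMap.map_eq_zero_of_eq _ _ _ hij
      · rw [Function.update_of_ne hij, Function.update_self, Function.update_self]
    rw [this, smul_zero, smul_zero]
  have hfilter : (Finset.univ : Finset (Finset m)).filter (fun s : Finset m => s.card ≤ 1)
      = insert ∅ (Finset.univ.image fun i : m => ({i} : Finset m)) := by
    ext s
    simp only [Finset.mem_filter, Finset.mem_univ, true_and, Finset.mem_insert,
      Finset.mem_image]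
    constructor
    · intro hs
      rcases Nat.le_one_iff_eq_zero_or_eq_one.mp hs with h0 | h1
      · exact Or.inl (Finset.card_eq_zero.mp h0)
      · obtain ⟨a, ha⟩ := Finset.card_eq_one.mp h1
        exact Or.inr ⟨a, ha.symm⟩
    · rintro (rfl | ⟨a, -, rfl⟩) <;> simp
  have hsplit : ∑ s : Finset m, Matrix.detRowAlternating (s.piecewise h g)
      = Matrix.detRowAlternating ((∅ : Finset m).piecewise h g)
        + ∑ i : m, Matrix.detRowAlternating (({i} : Finset m).piecewise h g) := by
    rw [← Finset.sum_filter_add_sum_filter_not Finset.univ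
      (fun s : Finset m => s.card ≤ 1)]
    have h2 : ∑ s ∈ Finset.univ.filter (fun s : Finset m => ¬ s.card ≤ 1),
        Matrix.detRowAlternating (s.piecewise h g) = 0 := by
      apply Finset.sum_eq_zero
      intro s hs
      exact hzero s (by simpa using (Finset.mem_filter.mp hs).2)
    rw [h2, add_zero, hfilter, Finset.sum_insert (by simp),
      Finset.sum_image (fun a _ b _ hab => Finset.singleton_injective hab)]
  rw [hsplit]
  have hempty : Matrix.detRowAlternating ((∅ : Finset m).piecewise h g) = ∏ i, d i := by
    rw [Finset.piecewise_empty]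
    have : Matrix.detRowAlternating g = (Matrix.diagonal d).det := by
      congr 1
      funext a b
      show g a b = Matrix.diagonal d a b
      simp [hg, Pi.single_apply, Matrix.diagonal_apply, eq_comm]
    rw [this, Matrix.det_diagonal]
  have hsingle : ∀ i : m, Matrix.detRowAlternating (({i} : Finset m).piecewise h g)
      = c * (w i * w i * ∏ j ∈ univ.erase i, d j) := by
    intro i
    rw [Finset.piecewise_singleton]
    have h1 : Function.update g i (h i) = Function.update g i ((c * w i) • w) := by
      rw [hh]
    rw [h1, AlternatingMap.map_update_smul]
    have h2 : Matrix.detRowAlternating (Function.update g i w)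
        = ((Matrix.diagonal d).updateRow i w).det := by
      congr 1
      funext a b
      show Function.update g i w a b = (Matrix.diagonal d).updateRow i w a b
      by_cases ha : a = i
      · subst ha; rw [Function.update_self, Matrix.updateRow_self]
      · rw [Function.update_of_ne ha, Matrix.updateRow_ne ha]
        show g a b = Matrix.diagonal d a b
        simp [hg, Pi.single_apply, Matrix.diagonal_apply, eq_comm]
    rw [h2, det_updateRow_diagonal, smul_eq_mul]
    ring
  rw [hempty]
  congr 1
  rw [Finset.mul_sum]
  exact Finset.sum_congr rfl fun i _ => hsingle i

open scoped RealInnerProductSpace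

lemma det_resolvent_formula {N : ℕ} (X : Matrix (Fin N) (Fin N) ℝ)
    (hX : X.IsHermitian) (ζ : EuclideanSpace ℝ (Fin N)) (lam t : ℝ) :
    (lam • (1 : Matrix (Fin N) (Fin N) ℝ) - X - t • vecMulVec ζ ζ).det
      = ∏ i, (lam - hX.eigenvalues i)
        - t * ∑ i, (⟪hX.eigenvectorBasis i, ζ⟫ * ⟪hX.eigenvectorBasis i, ζ⟫)
            * ∏ j ∈ univ.erase i, (lam - hX.eigenvalues j) := by
  classical
  set U : Matrix (Fin N) (Fin N) ℝ := (hX.eigenvectorUnitary : Matrix (Fin N) (Fin N) ℝ) with hUdef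
  have hU1 : star U * U = 1 := Unitary.coe_star_mul_self hX.eigenvectorUnitary
  have hU2 : U * star U = 1 := Unitary.coe_mul_star_self hX.eigenvectorUnitary
  set w : Fin N → ℝ := star U *ᵥ (ζ : Fin N → ℝ) with hwdef
  have hspec : X = U * Matrix.diagonal hX.eigenvalues * star U := by
    have h := hX.spectral_theorem
    simpa using h
  have hvmv : U * vecMulVec w w * star U = vecMulVec (ζ : Fin N → ℝ) (ζ : Fin N → ℝ) := by
    have hcol : Matrix.replicateCol Unit w = star U * Matrix.replicateCol Unit (ζ : Fin N → ℝ) :=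
      Matrix.replicateCol_mulVec _ _
    have hrow : Matrix.replicateRow Unit w = Matrix.replicateRow Unit (ζ : Fin N → ℝ) * U := by
      have hstar : (star U)ᵀ = U := by
        rw [Matrix.star_eq_conjTranspose, Matrix.conjTranspose_eq_transpose_of_trivial,
          Matrix.transpose_transpose]
      rw [hwdef, Matrix.replicateRow_mulVec, Matrix.transpose_mul, Matrix.transpose_replicateCol, hstar]
    rw [vecMulVec_eq Unit, vecMulVec_eq Unit, hcol, hrow]
    rw [show U * (star U * Matrix.replicateCol Unit (ζ : Fin N → ℝ) * (Matrix.replicateRow Unit (ζ : Fin N → ℝ) * U)) * star U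
        = (U * star U) * Matrix.replicateCol Unit (ζ : Fin N → ℝ) * Matrix.replicateRow Unit (ζ : Fin N → ℝ) * (U * star U) by
      simp only [Matrix.mul_assoc]]
    rw [hU2, Matrix.one_mul, Matrix.mul_one]
  have hconj : lam • (1 : Matrix (Fin N) (Fin N) ℝ) - X - t • vecMulVec ζ ζ
      = U * (lam • 1 - Matrix.diagonal hX.eigenvalues - t • vecMulVec w w) * star U := by
    rw [Matrix.mul_sub, Matrix.sub_mul, Matrix.mul_sub, Matrix.sub_mul,
      Matrix.mul_smul, Matrix.mul_one, Matrix.smul_mul, hU2,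
      Matrix.mul_smul, Matrix.smul_mul, hvmv, ← hspec]
  rw [hconj]
  have hdet3 : (U * (lam • 1 - Matrix.diagonal hX.eigenvalues - t • vecMulVec w w) * star U).det
      = (lam • 1 - Matrix.diagonal hX.eigenvalues - t • vecMulVec w w).det := by
    have hone : U.det * (star U).det = 1 := by
      rw [← Matrix.det_mul, hU2, Matrix.det_one]
    rw [Matrix.det_mul, Matrix.det_mul]
    calc U.det * (lam • 1 - Matrix.diagonal hX.eigenvalues - t • vecMulVec w w).det
          * (star U).det
        = (lam • 1 - Matrix.diagonal hX.eigenvalues - t • vecMulVec w w).det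
          * (U.det * (star U).det) := by ring
      _ = _ := by rw [hone, mul_one]
  rw [hdet3]
  have hinner : lam • (1 : Matrix (Fin N) (Fin N) ℝ) - Matrix.diagonal hX.eigenvalues
        - t • vecMulVec w w
      = Matrix.diagonal (fun i => lam - hX.eigenvalues i) + (-t) • vecMulVec w w := by
    rw [Matrix.smul_one_eq_diagonal, Matrix.diagonal_sub, sub_eq_add_neg, neg_smul]
  rw [hinner, det_diagonal_add_smul_vecMulVec]
  have hw : ∀ i, w i = ⟪hX.eigenvectorBasis i, ζ⟫ := by
    intro i
    rw [hwdef]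
    simp only [Matrix.mulVec, dotProduct, Matrix.star_apply, star_trivial,
      PiLp.inner_apply, RCLike.inner_apply, conj_trivial]
    refine Finset.sum_congr rfl fun j _ => ?_
    rw [mul_comm]; rfl
  simp only [hw]
  ring

lemma proj_norm_eq {N : ℕ} (X : Matrix (Fin N) (Fin N) ℝ) (hX : X.IsHermitian)
    (ζ : EuclideanSpace ℝ (Fin N)) (μ : ℝ) :
    ‖(Submodule.orthogonalProjectionOnto (LinearMap.ker (Matrix.toEuclideanLin X - μ • LinearMap.id)) ζ :
        EuclideanSpace ℝ (Fin N))‖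
      = Real.sqrt (∑ i ∈ univ.filter (fun i => hX.eigenvalues i = μ),
          ⟪hX.eigenvectorBasis i, ζ⟫ * ⟪hX.eigenvectorBasis i, ζ⟫) := by
  classical
  set K := LinearMap.ker (Matrix.toEuclideanLin X - μ • (LinearMap.id
    : EuclideanSpace ℝ (Fin N) →ₗ[ℝ] EuclideanSpace ℝ (Fin N))) with hK
  set b := hX.eigenvectorBasis with hb
  set s := univ.filter (fun i => hX.eigenvalues i = μ) with hs
  set l : Fin N → ℝ := fun i => ⟪b i, ζ⟫ with hl
  set u : EuclideanSpace ℝ (Fin N) := ∑ i ∈ s, l i • b i with hu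
  have hXb : ∀ i, Matrix.toEuclideanLin X (b i) = hX.eigenvalues i • b i := by
    intro i
    have h1 := hX.mulVec_eigenvectorBasis i
    apply (WithLp.equiv 2 (Fin N → ℝ)).injective
    simpa [Matrix.toEuclideanLin_apply] using h1
  have hmemK : ∀ v : EuclideanSpace ℝ (Fin N),
      v ∈ K ↔ Matrix.toEuclideanLin X v = μ • v := by
    intro v
    rw [hK, LinearMap.mem_ker, LinearMap.sub_apply, LinearMap.smul_apply, LinearMap.id_apply,
      sub_eq_zero]
  have hbK : ∀ i ∈ s, b i ∈ K := by
    intro i hi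
    rw [hmemK, hXb i, (Finset.mem_filter.mp hi).2]
  have huK : u ∈ K := Submodule.sum_mem K fun i hi => Submodule.smul_mem K _ (hbK i hi)
  have horth : ∀ v ∈ K, ∀ i, i ∉ s → ⟪b i, v⟫ = 0 := by
    intro v hv i hi
    have hsymm := Matrix.isHermitian_iff_isSymmetric.mp hX
    have h1 : ⟪Matrix.toEuclideanLin X (b i), v⟫ = ⟪b i, Matrix.toEuclideanLin X v⟫ :=
      hsymm (b i) v
    rw [hXb i, (hmemK v).mp hv, real_inner_smul_left, real_inner_smul_right] at h1
    have hne : hX.eigenvalues i ≠ μ := by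
      simpa [hs] using hi
    have := sub_eq_zero.mpr h1
    rw [← sub_mul] at this
    exact (mul_eq_zero.mp this).resolve_left (sub_ne_zero.mpr hne)
  have hproj : (Submodule.orthogonalProjectionOnto K ζ : EuclideanSpace ℝ (Fin N)) = u := by
    rw [Submodule.coe_orthogonalProjectionOnto_apply]
    apply Submodule.eq_starProjection_of_mem_of_inner_eq_zero huK
    intro v hv
    rw [← b.sum_inner_mul_inner (ζ - u) v]
    apply Finset.sum_eq_zero
    intro i _
    by_cases his : i ∈ s
    · have h2 : ⟪ζ - u, b i⟫ = 0 := by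
        rw [inner_sub_left]
        have h3 : ⟪u, b i⟫ = l i := by
          rw [hu]
          simpa using b.orthonormal.inner_left_sum l his
        rw [h3, hl, real_inner_comm, sub_self]
      rw [h2, zero_mul]
    · rw [horth v hv i his, mul_zero]
  rw [hproj]
  have hnorm : ⟪u, u⟫ = ∑ i ∈ s, l i * l i := by
    rw [hu]
    simpa using b.orthonormal.inner_sum l l s
  rw [norm_eq_sqrt_real_inner, hnorm]

open Polynomial in
lemma multiset_map_eq_of_prod_eq {N : ℕ} (ev ev' : Fin N → ℝ)
    (h : ∀ lam : ℝ, ∏ i, (lam - ev i) = ∏ i, (lam - ev' i)) :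
    ((univ.val.map ev : Multiset ℝ)) = univ.val.map ev' := by
  have hp : (∏ i, (X - C (ev i)) : ℝ[X]) = ∏ i, (X - C (ev' i)) := by
    apply Polynomial.funext
    intro r
    simpa [eval_prod] using h r
  have h1 : ∀ g : Fin N → ℝ, (∏ i, (X - C (g i)) : ℝ[X])
      = ((univ.val.map g).map fun a => X - C a).prod := by
    intro g
    rw [Multiset.map_map]
    rfl
  have h2 := congrArg Polynomial.roots hp
  rwa [h1 ev, h1 ev', Polynomial.roots_multiset_prod_X_sub_C,
    Polynomial.roots_multiset_prod_X_sub_C] at h2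


open Polynomial in
lemma extract_aux {N : ℕ} (ev : Fin N → ℝ) (a : Fin N → ℝ) (μ : ℝ)
    {m : ℕ} (hm : m = (univ.filter (fun i => ev i = μ)).card) (hm1 : 1 ≤ m) :
    ∃ H : ℝ[X],
      (∑ i, C (a i) * ∏ j ∈ univ.erase i, (X - C (ev j)))
          = (X - C μ) ^ (m - 1) * H
      ∧ H.eval μ = (∑ i ∈ univ.filter (fun i => ev i = μ), a i)
          * ∏ j ∈ univ.filter (fun j => ev j ≠ μ), (μ - ev j) := by
  classical
  set s := univ.filter (fun i => ev i = μ) with hs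
  set k : Fin N → ℕ := fun i => ((univ.erase i).filter (fun j => ev j = μ)).card with hk
  have hkval : ∀ i, k i = if i ∈ s then m - 1 else m := by
    intro i
    rw [hk]
    simp only []
    rw [Finset.filter_erase]
    by_cases hi : i ∈ s
    · rw [if_pos hi, ← hs, Finset.card_erase_of_mem hi, hm]
    · rw [if_neg hi, ← hs, Finset.erase_eq_of_notMem hi, hm]
  set g : Fin N → ℝ[X] :=
    fun i => ∏ j ∈ (univ.erase i).filter (fun j => ev j ≠ μ), (X - C (ev j)) with hg
  set H : ℝ[X] := ∑ i, C (a i) * ((X - C μ) ^ (k i - (m - 1)) * g i) with hH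
  refine ⟨H, ?_, ?_⟩
  · rw [hH, Finset.mul_sum]
    refine Finset.sum_congr rfl fun i _ => ?_
    have hsplit : (∏ j ∈ univ.erase i, (X - C (ev j)) : ℝ[X])
        = (X - C μ) ^ (k i) * g i := by
      rw [← Finset.prod_filter_mul_prod_filter_not (univ.erase i) (fun j => ev j = μ)]
      congr 1
      have hcongr : (∏ j ∈ (univ.erase i).filter (fun j => ev j = μ), (X - C (ev j)) : ℝ[X])
          = ∏ _j ∈ (univ.erase i).filter (fun j => ev j = μ), (X - C μ) :=
        Finset.prod_congr rfl fun j hj => by rw [(Finset.mem_filter.mp hj).2]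
      rw [hcongr, Finset.prod_const, hk]
    have hge : m - 1 ≤ k i := by
      rw [hkval i]
      split
      · exact le_refl _
      · omega
    have hpow : ((X : ℝ[X]) - C μ) ^ (k i)
        = (X - C μ) ^ (m - 1) * (X - C μ) ^ (k i - (m - 1)) := by
      rw [← pow_add]
      congr 1
      omega
    rw [hsplit, hpow]
    ring
  · rw [hH, Polynomial.eval_finset_sum]
    have hterm : ∀ i, (C (a i) * ((X - C μ) ^ (k i - (m - 1)) * g i)).eval μ
        = if i ∈ s then a i * ∏ j ∈ univ.filter (fun j => ev j ≠ μ), (μ - ev j) else 0 := by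
      intro i
      by_cases hi : i ∈ s
      · rw [if_pos hi]
        have hki : k i - (m - 1) = 0 := by rw [hkval i, if_pos hi]; omega
        have hgi : (univ.erase i).filter (fun j => ev j ≠ μ)
            = univ.filter (fun j => ev j ≠ μ) := by
          rw [Finset.filter_erase, Finset.erase_eq_of_notMem]
          simp only [Finset.mem_filter, not_and]
          intro _
          simpa [hs] using (Finset.mem_filter.mp hi).2
        simp [hki, hg, hgi, Polynomial.eval_prod]
      · rw [if_neg hi]
        have hki : k i - (m - 1) = 1 := by rw [hkval i, if_neg hi]; omega
        simp [hki]
    rw [Finset.sum_congr rfl (fun i _ => hterm i), Finset.sum_ite_mem,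
      Finset.univ_inter, ← Finset.sum_mul]

open Polynomial in
lemma sum_filter_eq_extract {N : ℕ} (ev ev' a a' : Fin N → ℝ) (μ : ℝ)
    (hms : ((univ.val.map ev : Multiset ℝ)) = univ.val.map ev')
    (hf : ∀ lam : ℝ, ∑ i, a i * ∏ j ∈ univ.erase i, (lam - ev j)
        = ∑ i, a' i * ∏ j ∈ univ.erase i, (lam - ev' j)) :
    ∑ i ∈ univ.filter (fun i => ev i = μ), a i
      = ∑ i ∈ univ.filter (fun i => ev' i = μ), a' i := by
  classical
  have hcount : ∀ g : Fin N → ℝ, Multiset.count μ (univ.val.map g)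
      = (univ.filter (fun i => g i = μ)).card := by
    intro g
    rw [Multiset.count_map]
    have h1 : Multiset.filter (fun i => μ = g i) univ.val
        = Multiset.filter (fun i => g i = μ) univ.val :=
      Multiset.filter_congr (fun x _ => eq_comm)
    rw [h1, Finset.card, Finset.filter_val]
  have hcard : (univ.filter (fun i => ev i = μ)).card
      = (univ.filter (fun i => ev' i = μ)).card := by
    rw [← hcount ev, ← hcount ev', hms]
  by_cases hm0 : (univ.filter (fun i => ev i = μ)).card = 0
  · rw [Finset.card_eq_zero] at hm0
    have hm0' : univ.filter (fun i => ev' i = μ) = ∅ :=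
      Finset.card_eq_zero.mp (hcard ▸ (by rw [hm0]; rfl))
    rw [hm0, hm0', Finset.sum_empty, Finset.sum_empty]
  · set m := (univ.filter (fun i => ev i = μ)).card with hmdef
    have hm1 : 1 ≤ m := Nat.one_le_iff_ne_zero.mpr hm0
    obtain ⟨H, hH1, hH2⟩ := extract_aux ev a μ hmdef hm1
    obtain ⟨H', hH1', hH2'⟩ := extract_aux ev' a' μ (hmdef.trans hcard) hm1
    have hpoly : (∑ i, C (a i) * ∏ j ∈ univ.erase i, (X - C (ev j)) : ℝ[X])
        = ∑ i, C (a' i) * ∏ j ∈ univ.erase i, (X - C (ev' j)) := by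
      apply Polynomial.funext
      intro r
      simpa [Polynomial.eval_finset_sum, Polynomial.eval_prod] using hf r
    rw [hpoly, hH1'] at hH1
    have hHeq : H' = H :=
      mul_left_cancel₀ (pow_ne_zero _ (Polynomial.X_sub_C_ne_zero μ)) hH1
    have hrprod : ∀ g : Fin N → ℝ, (∏ j ∈ univ.filter (fun j => g j ≠ μ), (μ - g j))
        = (((univ.val.map g).filter (fun x => x ≠ μ)).map (fun x => μ - x)).prod := by
      intro g
      rw [Finset.prod_eq_multiset_prod, Finset.filter_val, Multiset.filter_map,
        Multiset.map_map]
      rfl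
    have hr : (∏ j ∈ univ.filter (fun j => ev j ≠ μ), (μ - ev j))
        = ∏ j ∈ univ.filter (fun j => ev' j ≠ μ), (μ - ev' j) := by
      rw [hrprod ev, hrprod ev', hms]
    have hrne : (∏ j ∈ univ.filter (fun j => ev j ≠ μ), (μ - ev j)) ≠ 0 := by
      apply Finset.prod_ne_zero_iff.mpr
      intro j hj
      have := (Finset.mem_filter.mp hj).2
      exact sub_ne_zero.mpr (Ne.symm this)
    rw [hHeq] at hH2'
    rw [hH2, hr] at hH2'
    exact mul_right_cancel₀ (hr ▸ hrne) hH2'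


/-- **Lemma.** If real symmetric pairs `(X, ζ)` and `(Y, η)` are Φ-cospectral, then for every
`μ ∈ ℝ` the norm of the orthogonal projection of `ζ` onto the eigenspace `ker(X − μI)` equals
the norm of the orthogonal projection of `η` onto `ker(Y − μI)`. -/
theorem phi_cospectral_eigenprojection_norms
    {n : ℕ} (X Y : Matrix (Fin n) (Fin n) ℝ) (ζ η : EuclideanSpace ℝ (Fin n))
    (hXsymm : X.IsSymm) (hYsymm : Y.IsSymm)
    (hcospec : ∀ lam t : ℝ,
      (lam • (1 : Matrix (Fin n) (Fin n) ℝ) - X - t • vecMulVec ζ ζ).det =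
      (lam • (1 : Matrix (Fin n) (Fin n) ℝ) - Y - t • vecMulVec η η).det)
    (μ : ℝ) :
    ‖(Submodule.orthogonalProjectionOnto
        (LinearMap.ker (Matrix.toEuclideanLin X - μ • LinearMap.id)) ζ : EuclideanSpace ℝ (Fin n))‖ =
    ‖(Submodule.orthogonalProjectionOnto
        (LinearMap.ker (Matrix.toEuclideanLin Y - μ • LinearMap.id)) η : EuclideanSpace ℝ (Fin n))‖ := by
  classical
  have hX : X.IsHermitian := by
    rwa [Matrix.IsHermitian, Matrix.conjTranspose_eq_transpose_of_trivial]
  have hY : Y.IsHermitian := by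
    rwa [Matrix.IsHermitian, Matrix.conjTranspose_eq_transpose_of_trivial]
  have hprod : ∀ lam : ℝ, ∏ i, (lam - hX.eigenvalues i) = ∏ i, (lam - hY.eigenvalues i) := by
    intro lam
    have h0 := hcospec lam 0
    rw [det_resolvent_formula X hX ζ lam 0, det_resolvent_formula Y hY η lam 0] at h0
    simpa using h0
  have hF : ∀ lam : ℝ,
      ∑ i, (⟪hX.eigenvectorBasis i, ζ⟫ * ⟪hX.eigenvectorBasis i, ζ⟫)
          * ∏ j ∈ Finset.univ.erase i, (lam - hX.eigenvalues j)
      = ∑ i, (⟪hY.eigenvectorBasis i, η⟫ * ⟪hY.eigenvectorBasis i, η⟫)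
          * ∏ j ∈ Finset.univ.erase i, (lam - hY.eigenvalues j) := by
    intro lam
    have h0 := hcospec lam 0
    have h1 := hcospec lam 1
    rw [det_resolvent_formula X hX ζ lam 0, det_resolvent_formula Y hY η lam 0] at h0
    rw [det_resolvent_formula X hX ζ lam 1, det_resolvent_formula Y hY η lam 1] at h1
    rw [one_mul, one_mul] at h1
    rw [zero_mul, zero_mul, sub_zero, sub_zero] at h0
    linarith
  have hms := multiset_map_eq_of_prod_eq hX.eigenvalues hY.eigenvalues hprod
  have hS := sum_filter_eq_extract hX.eigenvalues hY.eigenvalues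
    (fun i => ⟪hX.eigenvectorBasis i, ζ⟫ * ⟪hX.eigenvectorBasis i, ζ⟫)
    (fun i => ⟪hY.eigenvectorBasis i, η⟫ * ⟪hY.eigenvectorBasis i, η⟫) μ hms hF
  rw [proj_norm_eq X hX ζ μ, proj_norm_eq Y hY η μ, hS]
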